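/- Let V be a type and let d : V → V → ℝ satisfy the directed triangle inequality d(a,c) ≤ d(a,b) + d(b,c) for all a,b,c ∈ V. For any vertices u, v, r ∈ V, if 4·d(v,r) + d(r,u) > 4·d(v,u) + 3·d(u,r), then 2·d(v,r) + d(r,u) > 2·d(v,u) + d(u,r). Consequently, for any finite eliminator set R ⊆ V, the set B⁴_out(v) = { u : ∀ r ∈ R, 4·d(v,r) + d(r,u) > 4·d(v,u) + 3·d(u,r) } is contained in the set B²_out(v) = { u : ∀ r ∈ R, 2·d(v,r) + d(r,u) > 2·d(v,u) + d(u,r) }. -/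
import Mathlib

/-- Lemma 5.10: the pointwise `B⁴_out` condition implies the `B²_out` condition, and
consequently `B⁴_out(v) ⊆ B²_out(v)` for every finite eliminator set `R`. -/
theorem b4_subset_b2 {V : Type*} (d : V → V → ℝ)
    (htri : ∀ a b c : V, d a c ≤ d a b + d b c)
    (v : V) :
    (∀ u r : V, 4 * d v r + d r u > 4 * d v u + 3 * d u r →
      2 * d v r + d r u > 2 * d v u + d u r) ∧
    (∀ R : Finset V,
      {u : V | ∀ r ∈ R, 4 * d v r + d r u > 4 * d v u + 3 * d u r} ⊆
        {u : V | ∀ r ∈ R, 2 * d v r + d r u > 2 * d v u + d u r}) := by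
  have key : ∀ u r : V, 4 * d v r + d r u > 4 * d v u + 3 * d u r →
      2 * d v r + d r u > 2 * d v u + d u r := by
    intro u r h
    have := htri v u r
    linarith
  exact ⟨key, fun R u hu r hr => key u r (hu r hr)⟩
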